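/- For all integers k ≥ 2 and m ≥ 0: γ̄_k − γ̄_{k+2⌊(m+1)/2⌋} ≤ m(m+1)/(2k) and γ̄_{k+1} − γ̄_{k+2⌊m/2⌋+1} ≤ m²/(2k). -/

import Mathlib

open Finset

/-- The sequence `γ` with `γ₁ = γ₂ = 1` and `γ_k = ∏_{j=1}^{⌊(k−1)/2⌋} (2j+1)/(2j)`
for `k ≥ 3` (the empty product is `1`, so the formula is also valid for `k = 1, 2`). -/
noncomputable def gammaSeq (k : ℕ) : ℝ :=
  ∏ j ∈ Finset.Icc 1 ((k - 1) / 2), (2 * (j : ℝ) + 1) / (2 * (j : ℝ))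

/-- `γ̄_k = γ_k / k`. -/
noncomputable def gammaBar (k : ℕ) : ℝ := gammaSeq k / k

/-- `δ_k = (1/3)(k + (−1)^k γ_k)`. -/
noncomputable def deltaSeq (k : ℕ) : ℝ := (1 / 3) * ((k : ℝ) + (-1) ^ k * gammaSeq k)

/-- `f_k(x,y) = (y, ((k+2)/(k+1))·x)`. -/
noncomputable def fmap (k : ℕ) : ℝ × ℝ → ℝ × ℝ :=
  fun xy => (xy.2, ((k : ℝ) + 2) / ((k : ℝ) + 1) * xy.1)

/-- `g_k(x,y) = (x + δ_{k+1}, ((k+2)/(k+1))·(y − δ_{k+1}))`. -/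
noncomputable def gmap (k : ℕ) : ℝ × ℝ → ℝ × ℝ :=
  fun xy => (xy.1 + deltaSeq (k + 1), ((k : ℝ) + 2) / ((k : ℝ) + 1) * (xy.2 - deltaSeq (k + 1)))

/-- `G_{k0} = id` and `G_{km} = g_{k+m−1} ∘ g_{k+m−2} ∘ ⋯ ∘ g_k` for `m ≥ 1`. -/
noncomputable def Gmap (k : ℕ) : ℕ → (ℝ × ℝ → ℝ × ℝ)
  | 0 => id
  | m + 1 => gmap (k + m) ∘ Gmap k m

/-- `F_{km} = G_{k+1,m−1} ∘ f_k` (for `m ≥ 1`). -/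
noncomputable def Fmap (k m : ℕ) : ℝ × ℝ → ℝ × ℝ := Gmap (k + 1) (m - 1) ∘ fmap k

/-- The sets `A_k ⊆ ℝ²`: `A₁ = {(0,0)}` and `A_{k+1} = f_k(A_k) ∪ g_k(A_k)` for
`k ≥ 1` (the value at `0` is junk). -/
noncomputable def Aset : ℕ → Set (ℝ × ℝ)
  | 0 => ∅
  | 1 => {(0, 0)}
  | k + 2 => fmap (k + 1) '' Aset (k + 1) ∪ gmap (k + 1) '' Aset (k + 1)

/-- For all integers `k ≥ 2` and `m ≥ 0`:
`γ̄_k − γ̄_{k+2⌊(m+1)/2⌋} ≤ m(m+1)/(2k)` and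
`γ̄_{k+1} − γ̄_{k+2⌊m/2⌋+1} ≤ m²/(2k)`. -/

private lemma prodIcc_pos (t : ℕ) : 0 < ∏ j ∈ Finset.Icc 1 t, (2 * (j : ℝ) + 1) / (2 * (j : ℝ)) := by
  apply Finset.prod_pos
  intro j hj
  have h1 : 1 ≤ j := (Finset.mem_Icc.mp hj).1
  have h1' : (1:ℝ) ≤ j := by exact_mod_cast h1
  apply div_pos <;> nlinarith

private lemma prodIcc_le (t : ℕ) : ∏ j ∈ Finset.Icc 1 t, (2 * (j : ℝ) + 1) / (2 * (j : ℝ)) ≤ (t : ℝ) + 1 := by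
  induction t with
  | zero => simp
  | succ t ih =>
    rw [Finset.prod_Icc_succ_top (by omega)]
    have hpos := prodIcc_pos t
    have hf : (2 * ((t:ℝ)+1) + 1) / (2 * ((t:ℝ)+1)) ≤ ((t:ℝ)+2) / ((t:ℝ)+1) := by
      rw [div_le_div_iff₀ (by positivity) (by positivity)]
      ring_nf; nlinarith
    have hfnn : (0:ℝ) ≤ (2 * ((t:ℝ)+1) + 1) / (2 * ((t:ℝ)+1)) := by positivity
    calc (∏ j ∈ Finset.Icc 1 t, (2 * (j : ℝ) + 1) / (2 * (j : ℝ))) *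
          ((2 * ((t+1:ℕ):ℝ) + 1) / (2 * ((t+1:ℕ):ℝ)))
        ≤ ((t:ℝ)+1) * (((t:ℝ)+2) / ((t:ℝ)+1)) := by
          push_cast
          exact mul_le_mul ih hf hfnn (by positivity)
      _ = (t:ℝ) + 2 := by field_simp
      _ = ((t+1:ℕ):ℝ) + 1 := by push_cast; ring


private lemma gammaSeq_mono {n : ℕ} (hn : 1 ≤ n) : gammaSeq n ≤ gammaSeq (n + 2) := by
  have ht : (n + 2 - 1) / 2 = (n - 1) / 2 + 1 := by omega
  unfold gammaSeq
  rw [ht, Finset.prod_Icc_succ_top (by omega)]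
  have hpos := prodIcc_pos ((n - 1) / 2)
  have hcnn : (0:ℝ) ≤ (((n-1)/2 : ℕ):ℝ) := Nat.cast_nonneg _
  have hf : (1:ℝ) ≤ (2 * ((((n-1)/2 : ℕ):ℝ) + 1) + 1) / (2 * ((((n-1)/2 : ℕ):ℝ) + 1)) := by
    rw [le_div_iff₀ (by nlinarith)]
    nlinarith
  calc (∏ j ∈ Finset.Icc 1 ((n-1)/2), (2 * (j : ℝ) + 1) / (2 * (j : ℝ)))
      = (∏ j ∈ Finset.Icc 1 ((n-1)/2), (2 * (j : ℝ) + 1) / (2 * (j : ℝ))) * 1 := by ring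
    _ ≤ (∏ j ∈ Finset.Icc 1 ((n-1)/2), (2 * (j : ℝ) + 1) / (2 * (j : ℝ))) *
        ((2 * ((((n-1)/2 : ℕ):ℝ) + 1) + 1) / (2 * ((((n-1)/2 : ℕ):ℝ) + 1))) :=
        mul_le_mul_of_nonneg_left hf hpos.le
    _ = (∏ j ∈ Finset.Icc 1 ((n-1)/2), (2 * (j : ℝ) + 1) / (2 * (j : ℝ))) *
        ((2 * (((n-1)/2 + 1 : ℕ):ℝ) + 1) / (2 * (((n-1)/2 + 1 : ℕ):ℝ))) := by push_cast; ring_nf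

private lemma gb_step (n : ℕ) (hn : 1 ≤ n) : gammaBar n - gammaBar (n + 2) ≤ 1 / n := by
  have hpos : 0 < gammaSeq n := prodIcc_pos _
  have hn' : (0:ℝ) < n := by exact_mod_cast hn
  have h1 : gammaSeq n ≤ ((n:ℝ) + 1) / 2 := by
    have h2 := prodIcc_le ((n - 1) / 2)
    have h3 : 2 * ((n - 1) / 2) + 1 ≤ n := by omega
    have h3' : (((n-1)/2 : ℕ):ℝ) ≤ ((n:ℝ) - 1) / 2 := by
      rw [le_div_iff₀ (by norm_num)]
      have h4 : ((2 * ((n-1)/2) + 1 : ℕ) : ℝ) ≤ (n:ℝ) := by exact_mod_cast h3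
      push_cast at h4
      linarith
    unfold gammaSeq
    linarith
  have h2 : gammaSeq n ≤ gammaSeq (n + 2) := gammaSeq_mono hn
  have hA : gammaSeq n / ((n:ℝ) + 2) ≤ gammaSeq (n + 2) / ((n+2:ℕ):ℝ) := by
    push_cast
    exact div_le_div_of_nonneg_right h2 (by positivity) |>.trans_eq rfl
  unfold gammaBar
  have key : gammaSeq n / n - gammaSeq n / ((n:ℝ) + 2) ≤ 1 / n := by
    rw [div_sub_div _ _ (ne_of_gt hn') (by positivity), div_le_div_iff₀ (by positivity) hn']
    nlinarith
  linarith

private lemma gb_tele (n : ℕ) (hn : 1 ≤ n) (s : ℕ) : gammaBar n - gammaBar (n + 2 * s) ≤ (s : ℝ) / n := by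
  induction s with
  | zero => simp
  | succ s ih =>
    have hst := gb_step (n + 2 * s) (by omega)
    have hn' : (0:ℝ) < n := by exact_mod_cast hn
    have h2 : (1:ℝ) / ((n + 2*s : ℕ):ℝ) ≤ 1 / n := by
      apply one_div_le_one_div_of_le hn'
      push_cast; linarith [Nat.cast_nonneg (α := ℝ) s]
    have he : n + 2 * (s + 1) = (n + 2 * s) + 2 := by omega
    rw [he]
    push_cast
    rw [add_div]
    have := hst.trans h2
    linarith

theorem stmt14 (k m : ℕ) (hk : 2 ≤ k) :
    gammaBar k - gammaBar (k + 2 * ((m + 1) / 2)) ≤ (m : ℝ) * ((m : ℝ) + 1) / (2 * k) ∧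
    gammaBar (k + 1) - gammaBar (k + 2 * (m / 2) + 1) ≤ (m : ℝ) ^ 2 / (2 * k) := by
  have hk' : (0:ℝ) < k := by exact_mod_cast (by omega : 0 < k)
  constructor
  · refine (gb_tele k (by omega) ((m + 1) / 2)).trans ?_
    rw [div_le_div_iff₀ hk' (by positivity)]
    have hnat : 2 * ((m + 1) / 2) ≤ m * (m + 1) := by
      rcases Nat.eq_zero_or_pos m with h0 | h1
      · subst h0; simp
      · calc 2 * ((m + 1) / 2) ≤ m + 1 := by omega
          _ ≤ m * (m + 1) := Nat.le_mul_of_pos_left _ h1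
    have hcast : ((2 * ((m + 1) / 2) : ℕ) : ℝ) ≤ ((m * (m + 1) : ℕ) : ℝ) := by
      exact_mod_cast hnat
    push_cast at hcast
    nlinarith [Nat.cast_nonneg (α := ℝ) ((m + 1) / 2)]
  · have he : k + 2 * (m / 2) + 1 = (k + 1) + 2 * (m / 2) := by omega
    rw [he]
    refine (gb_tele (k + 1) (by omega) (m / 2)).trans ?_
    have hk1 : (0:ℝ) < ((k + 1 : ℕ) : ℝ) := by positivity
    rw [div_le_div_iff₀ hk1 (by positivity)]
    have hnat : 2 * (m / 2) ≤ m * m := by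
      rcases Nat.eq_zero_or_pos m with h0 | h1
      · subst h0; simp
      · calc 2 * (m / 2) ≤ m := by omega
          _ ≤ m * m := Nat.le_mul_of_pos_left _ h1
    have hcast : ((2 * (m / 2) : ℕ) : ℝ) ≤ ((m * m : ℕ) : ℝ) := by exact_mod_cast hnat
    push_cast at hcast ⊢
    nlinarith [Nat.cast_nonneg (α := ℝ) (m / 2), sq_nonneg ((m:ℝ))]
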